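/- Let m > 0, φ(θ) = -m cos θ, and define b_φ(e) = 2√2 ∫₀^{2π} cos θ · √((e + m cos θ)₊) dθ. Then b_φ(e) = 4√2 ∫₀^{π/2} cos θ (√((e + m cos θ)₊) - √((e - m cos θ)₊)) dθ, and b_φ(e) > 0 for all e > -m. -/

import Mathlib

open Real Set intervalIntegral

noncomputable def bphi (m e : ℝ) : ℝ :=
  2 * Real.sqrt 2 * ∫ θ in (0:ℝ)..(2 * π), Real.cos θ * Real.sqrt (max (e + m * Real.cos θ) 0)

section aux
variable (m e : ℝ)

lemma contg : Continuous (fun θ => Real.cos θ * Real.sqrt (max (e + m * Real.cos θ) 0)) := by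
  fun_prop

lemma key : (∫ θ in (0:ℝ)..(2 * π), Real.cos θ * Real.sqrt (max (e + m * Real.cos θ) 0))
    = 2 * ∫ θ in (0:ℝ)..(π / 2),
        Real.cos θ * (Real.sqrt (max (e + m * Real.cos θ) 0)
          - Real.sqrt (max (e - m * Real.cos θ) 0)) := by
  set g : ℝ → ℝ := fun θ => Real.cos θ * Real.sqrt (max (e + m * Real.cos θ) 0) with hg
  have hcont : Continuous g := contg m e
  have hper : Function.Periodic g (2 * π) := by
    intro x; simp [hg, Real.cos_add_two_pi]
  have h1 : (∫ θ in (0:ℝ)..(2 * π), g θ) = ∫ θ in (-π)..π, g θ := by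
    have h := hper.intervalIntegral_add_eq 0 (-π)
    simpa [zero_add] using h.trans (by norm_num [two_mul])
  have heven : ∀ x, g (-x) = g x := by
    intro x; simp [hg]
  have h2 : (∫ θ in (-π)..(0:ℝ), g θ) = ∫ θ in (0:ℝ)..π, g θ := by
    rw [show (0:ℝ) = -(0:ℝ) by norm_num, ← intervalIntegral.integral_comp_neg g]
    simp [heven]
  have h3 : (∫ θ in (π/2)..π, g θ)
      = ∫ θ in (0:ℝ)..(π/2), -(Real.cos θ * Real.sqrt (max (e - m * Real.cos θ) 0)) := by
    have h := intervalIntegral.integral_comp_sub_left (a := (0:ℝ)) (b := π/2) g π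
    rw [show π - π/2 = π/2 by ring, show π - 0 = π by ring] at h
    rw [← h]
    apply intervalIntegral.integral_congr
    intro x hx
    simp only [hg, Real.cos_pi_sub, mul_neg, neg_mul, ← sub_eq_add_neg]
  have h4 : (∫ θ in (0:ℝ)..π, g θ) = (∫ θ in (0:ℝ)..(π/2), g θ) + ∫ θ in (π/2)..π, g θ := by
    rw [intervalIntegral.integral_add_adjacent_intervals (hcont.intervalIntegrable _ _)
      (hcont.intervalIntegrable _ _)]
  have h5 : (∫ θ in (-π)..π, g θ) = (∫ θ in (-π)..(0:ℝ), g θ) + ∫ θ in (0:ℝ)..π, g θ := by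
    rw [intervalIntegral.integral_add_adjacent_intervals (hcont.intervalIntegrable _ _)
      (hcont.intervalIntegrable _ _)]
  have hhalf : (∫ θ in (0:ℝ)..π, g θ)
      = ∫ θ in (0:ℝ)..(π / 2),
        Real.cos θ * (Real.sqrt (max (e + m * Real.cos θ) 0)
          - Real.sqrt (max (e - m * Real.cos θ) 0)) := by
    rw [h4, h3, ← intervalIntegral.integral_add (hcont.intervalIntegrable _ _)
      (Continuous.intervalIntegrable (by fun_prop : Continuous (fun θ => -(Real.cos θ * Real.sqrt (max (e - m * Real.cos θ) 0)))) _ _)]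
    apply intervalIntegral.integral_congr
    intro x hx
    simp only [hg]
    ring
  rw [h1, h5, h2, hhalf, two_mul]
end aux

/-- b_φ(e) = 4√2 ∫₀^{π/2} cos θ (√((e + m cos θ)₊) - √((e - m cos θ)₊)) dθ,
and b_φ(e) > 0 for e > -m. -/
theorem bphi_symm_and_pos (m : ℝ) (hm : 0 < m) (e : ℝ) :
    bphi m e = 4 * Real.sqrt 2 * ∫ θ in (0:ℝ)..(π / 2),
        Real.cos θ * (Real.sqrt (max (e + m * Real.cos θ) 0)
          - Real.sqrt (max (e - m * Real.cos θ) 0)) ∧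
    (-m < e → 0 < bphi m e) := by
  have hkey := key m e
  refine ⟨by rw [bphi, hkey]; ring, ?_⟩
  intro he
  rw [bphi, hkey]
  have h2 : (0:ℝ) < Real.sqrt 2 := by positivity
  set f : ℝ → ℝ := fun θ => Real.cos θ * (Real.sqrt (max (e + m * Real.cos θ) 0)
    - Real.sqrt (max (e - m * Real.cos θ) 0)) with hf
  have hcontf : Continuous f := by fun_prop
  have hInt : 0 < ∫ θ in (0:ℝ)..(π / 2), f θ := by
    set t : ℝ := max (-e / m) 0 with ht
    have ht1 : t < 1 := max_lt ((div_lt_one hm).mpr (by linarith)) one_pos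
    have ht0 : 0 ≤ t := le_max_right _ _
    set c : ℝ := Real.arccos ((t + 1) / 2) with hc
    have hval : ((t + 1) / 2 : ℝ) ∈ Set.Icc (-1 : ℝ) 1 := by
      constructor <;> [linarith; linarith]
    have hcosc : Real.cos c = (t + 1) / 2 := Real.cos_arccos hval.1 hval.2
    have hc0 : 0 < c := Real.arccos_pos.mpr (by linarith)
    have hc2 : c < π / 2 := Real.arccos_lt_pi_div_two.mpr (by linarith)
    have hsplit : (∫ θ in (0:ℝ)..(π/2), f θ)
        = (∫ θ in (0:ℝ)..c, f θ) + ∫ θ in c..(π/2), f θ :=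
      (intervalIntegral.integral_add_adjacent_intervals (hcontf.intervalIntegrable _ _)
        (hcontf.intervalIntegrable _ _)).symm
    have hpos1 : 0 < ∫ θ in (0:ℝ)..c, f θ := by
      apply intervalIntegral.intervalIntegral_pos_of_pos_on (hcontf.intervalIntegrable _ _)
        _ hc0
      intro x hx
      have hxc : Real.cos c < Real.cos x := by
        apply Real.cos_lt_cos_of_nonneg_of_le_pi hx.1.le (by linarith [Real.pi_pos]) hx.2
      have hcx : t < Real.cos x := by rw [hcosc] at hxc; linarith
      have hcx0 : 0 < Real.cos x := lt_of_le_of_lt ht0 hcx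
      have hA : 0 < e + m * Real.cos x := by
        have : -e / m < Real.cos x := lt_of_le_of_lt (le_max_left _ _) hcx
        have := (div_lt_iff₀ hm).mp this
        nlinarith
      have hBA : max (e - m * Real.cos x) 0 < max (e + m * Real.cos x) 0 := by
        rw [max_eq_left hA.le]
        exact max_lt (by nlinarith) hA
      have : Real.sqrt (max (e - m * Real.cos x) 0) < Real.sqrt (max (e + m * Real.cos x) 0) :=
        Real.sqrt_lt_sqrt (le_max_right _ _) hBA
      have := sub_pos.mpr this
      exact mul_pos hcx0 this
    have hpos2 : 0 ≤ ∫ θ in c..(π/2), f θ := by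
      apply intervalIntegral.integral_nonneg hc2.le
      intro x hx
      have hcx0 : 0 ≤ Real.cos x :=
        Real.cos_nonneg_of_mem_Icc ⟨by linarith [hx.1, Real.pi_pos], hx.2⟩
      have hBA : max (e - m * Real.cos x) 0 ≤ max (e + m * Real.cos x) 0 :=
        max_le_max (by nlinarith) le_rfl
      have := Real.sqrt_le_sqrt hBA
      exact mul_nonneg hcx0 (by linarith)
    rw [hsplit]; linarith
  positivity
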